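/- arXiv:0908.2017 — 3 statements merged into one kernel-verified Lean document; each statement's English description precedes it below -/
import Mathlib

section
/- Let Γ be a connected k-regular graph on n vertices with k ≥ 2 and diameter at least 3. Then Γ has an eigenvalue θ different from k with |θ| > √(k/2). -/
open SimpleGraph Matrix

/-- `θ` is an eigenvalue of the (real) adjacency matrix of `G`. -/
def IsAdjEigenvalue {V : Type*} [Fintype V] [DecidableEq V] (G : SimpleGraph V)
    [DecidableRel G.Adj] (θ : ℝ) : Prop :=
  ∃ v : V → ℝ, v ≠ 0 ∧ (G.adjMatrix ℝ).mulVec v = θ • v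

theorem stmt0 {V : Type*} [Fintype V] [DecidableEq V] (G : SimpleGraph V)
    [DecidableRel G.Adj] (k : ℕ) (hk : 2 ≤ k)
    (hconn : G.Connected) (hreg : G.IsRegularOfDegree k)
    (hdiam : ∃ x y : V, 3 ≤ G.dist x y) :
    ∃ θ : ℝ, IsAdjEigenvalue G θ ∧ θ ≠ (k : ℝ) ∧ Real.sqrt ((k : ℝ) / 2) < |θ| := by
  classical
  obtain ⟨x, y, hxy⟩ := hdiam
  have hxyne : x ≠ y := by
    rintro rfl; simp [SimpleGraph.dist_self] at hxy
  -- no common neighbors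
  have hnocommon : ∀ v : V, ¬(G.Adj v x ∧ G.Adj v y) := by
    rintro v ⟨hvx, hvy⟩
    have hle := SimpleGraph.dist_le (hvx.symm.toWalk.append hvy.toWalk)
    simp [SimpleGraph.Walk.length_append] at hle
    omega
  set A := G.adjMatrix ℝ with hA
  have hH : A.IsHermitian := by
    rw [Matrix.IsHermitian, Matrix.conjTranspose_eq_transpose_of_trivial]
    exact G.isSymm_adjMatrix
  have hAsym : ∀ u v : V, A u v = A v u := by
    intro u v
    simp [hA, SimpleGraph.adjMatrix_apply, G.adj_comm]
  set b := hH.eigenvectorBasis with hb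
  set μ := hH.eigenvalues with hμ
  -- inner products are dot products
  have hinner : ∀ u w : EuclideanSpace ℝ V, (inner ℝ u w : ℝ) = ∑ j, u j * w j := by
    intro u w
    rw [PiLp.inner_apply]
    simp [RCLike.inner_apply, mul_comm]
  -- the test vector
  set f : EuclideanSpace ℝ V :=
    WithLp.toLp 2 (fun v => (if v = x then (1:ℝ) else 0) - (if v = y then (1:ℝ) else 0)) with hf
  set c : V → ℝ := fun i => inner ℝ (b i) f with hc
  have hbmul : ∀ i, A *ᵥ ⇑(b i) = μ i • ⇑(b i) := fun i => hH.mulVec_eigenvectorBasis i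
  have hbv : ∀ i v, ∑ u, A v u * b i u = μ i * b i v := by
    intro i v
    exact congrFun (hbmul i) v
  set g : EuclideanSpace ℝ V := WithLp.toLp 2 (A *ᵥ ⇑f) with hg
  have hgv : ∀ v, g v
      = (if G.Adj v x then (1:ℝ) else 0) - (if G.Adj v y then (1:ℝ) else 0) := by
    intro v
    show (A *ᵥ ⇑f) v = _
    rw [hA, SimpleGraph.adjMatrix_mulVec_apply]
    have hfv : ∀ u : V, (WithLp.equiv 2 (V → ℝ)) f u
        = (if u = x then (1:ℝ) else 0) - (if u = y then (1:ℝ) else 0) := fun u => rfl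
    simp only [hfv]
    rw [Finset.sum_sub_distrib]
    congr 1
    · rw [Finset.sum_ite_eq' (G.neighborFinset v) x (fun _ => (1:ℝ))]
      simp [SimpleGraph.mem_neighborFinset]
    · rw [Finset.sum_ite_eq' (G.neighborFinset v) y (fun _ => (1:ℝ))]
      simp [SimpleGraph.mem_neighborFinset]
  -- ⟪f, f⟫ = 2
  have hff : (inner ℝ f f : ℝ) = 2 := by
    rw [hinner]
    have hfv : ∀ u : V, (f : V → ℝ) u
        = (if u = x then (1:ℝ) else 0) - (if u = y then (1:ℝ) else 0) := fun u => rfl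
    have key : ∀ v : V, (f : V → ℝ) v * (f : V → ℝ) v
        = (if v = x then (1:ℝ) else 0) + (if v = y then (1:ℝ) else 0) := by
      intro v
      rw [hfv]
      by_cases h1 : v = x <;> by_cases h2 : v = y <;> simp_all [hxyne]
    simp only [key]
    rw [Finset.sum_add_distrib, Finset.sum_ite_eq' Finset.univ x (fun _ => (1:ℝ)),
      Finset.sum_ite_eq' Finset.univ y (fun _ => (1:ℝ))]
    norm_num
  -- ⟪g, g⟫ = 2k
  have hgg : (inner ℝ g g : ℝ) = 2 * k := by
    rw [hinner]
    have key : ∀ v : V, g v * g v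
        = (if G.Adj v x then (1:ℝ) else 0) + (if G.Adj v y then (1:ℝ) else 0) := by
      intro v
      rw [hgv v]
      by_cases h1 : G.Adj v x <;> by_cases h2 : G.Adj v y
      · exact absurd ⟨h1, h2⟩ (hnocommon v)
      all_goals simp [h1, h2]
    simp only [key]
    rw [Finset.sum_add_distrib]
    have d1 : (∑ v : V, if G.Adj v x then (1:ℝ) else 0) = k := by
      simp_rw [G.adj_comm _ x]
      rw [Finset.sum_boole]
      have : (Finset.univ.filter fun v => G.Adj x v) = G.neighborFinset x := by
        ext v; simp [SimpleGraph.mem_neighborFinset]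
      rw [this, ← SimpleGraph.degree, hreg x]
    have d2 : (∑ v : V, if G.Adj v y then (1:ℝ) else 0) = k := by
      simp_rw [G.adj_comm _ y]
      rw [Finset.sum_boole]
      have : (Finset.univ.filter fun v => G.Adj y v) = G.neighborFinset y := by
        ext v; simp [SimpleGraph.mem_neighborFinset]
      rw [this, ← SimpleGraph.degree, hreg y]
    rw [d1, d2]; ring
  have hcf : ∀ i, c i = ∑ v, b i v * f v := by
    intro i
    show (inner ℝ (b i) f : ℝ) = _
    rw [hinner]
  -- coefficients of g in the eigenbasis
  have hcoef : ∀ i, (inner ℝ (b i) g : ℝ) = μ i * c i := by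
    intro i
    rw [hinner, hcf i]
    have hgv' : ∀ v, g v = ∑ u, A v u * f u := fun v => rfl
    calc ∑ v, b i v * g v = ∑ v, ∑ u, b i v * (A v u * f u) := by
          simp only [hgv', Finset.mul_sum]
      _ = ∑ u, ∑ v, b i v * (A v u * f u) := Finset.sum_comm
      _ = ∑ u, (∑ v, A u v * b i v) * f u := by
          refine Finset.sum_congr rfl fun u _ => ?_
          rw [Finset.sum_mul]
          refine Finset.sum_congr rfl fun v _ => ?_
          rw [hAsym u v]; ring
      _ = ∑ u, (μ i * b i u) * f u := by
          refine Finset.sum_congr rfl fun u _ => ?_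
          rw [hbv i u]
      _ = μ i * ∑ u, b i u * f u := by
          rw [Finset.mul_sum]
          refine Finset.sum_congr rfl fun u _ => ?_
          ring
  have hcomm : ∀ i, (inner ℝ f (b i) : ℝ) = c i := fun i => (real_inner_comm f (b i)).symm
  have hcomm2 : ∀ i, (inner ℝ g (b i) : ℝ) = μ i * c i := by
    intro i; rw [real_inner_comm]; exact hcoef i
  -- Parseval identities
  have hsum1 : ∑ i, c i * c i = 2 := by
    have hp := b.sum_inner_mul_inner f f
    rw [hff] at hp
    rw [← hp]
    refine Finset.sum_congr rfl fun i _ => ?_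
    rw [hcomm i]
  have hsum2 : ∑ i, (μ i * c i) * (μ i * c i) = 2 * k := by
    have hp := b.sum_inner_mul_inner g g
    rw [hgg] at hp
    rw [← hp]
    refine Finset.sum_congr rfl fun i _ => ?_
    rw [hcomm2 i, hcoef i]
  have hkpos : (0:ℝ) < k := by positivity
  -- there is an index with c i ≠ 0 and μ i ^ 2 ≥ k
  have hexists : ∃ i, c i ≠ 0 ∧ (k:ℝ) ≤ μ i * μ i := by
    by_contra hcon
    push_neg at hcon
    have hne : ∃ i, c i ≠ 0 := by
      by_contra hz
      push_neg at hz
      have : (∑ i, c i * c i) = 0 := by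
        apply Finset.sum_eq_zero; intro i _; rw [hz i]; ring
      rw [hsum1] at this; norm_num at this
    obtain ⟨i₀, hi₀⟩ := hne
    have hlt : ∑ i, (μ i * c i) * (μ i * c i) < ∑ i, (k:ℝ) * (c i * c i) := by
      apply Finset.sum_lt_sum
      · intro i _
        by_cases hci : c i = 0
        · simp [hci]
        · have h1 := hcon i hci
          nlinarith [mul_self_nonneg (c i)]
      · refine ⟨i₀, Finset.mem_univ _, ?_⟩
        have h1 := hcon i₀ hi₀
        have hc2 : 0 < c i₀ * c i₀ := mul_self_pos.mpr hi₀
        nlinarith [mul_pos (by linarith : (0:ℝ) < (k:ℝ) - μ i₀ * μ i₀) hc2]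
    rw [hsum2, ← Finset.mul_sum, hsum1] at hlt
    linarith
  obtain ⟨i, hci, hμi⟩ := hexists
  refine ⟨μ i, ⟨⇑(b i), ?_, ?_⟩, ?_, ?_⟩
  · -- eigenvector nonzero
    intro h
    apply b.orthonormal.ne_zero i
    ext v
    exact congrFun h v
  · exact hbmul i
  · -- μ i ≠ k
    intro hμk
    have hlap : Matrix.toLin' (G.lapMatrix ℝ) ⇑(b i) = 0 := by
      ext v
      simp only [Matrix.toLin'_apply, Pi.zero_apply]
      rw [SimpleGraph.lapMatrix_mulVec_apply]
      have h3 := congrFun (hbmul i) v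
      rw [hA, SimpleGraph.adjMatrix_mulVec_apply] at h3
      rw [hreg v, h3, hμk]
      simp
    have hconst := (SimpleGraph.lapMatrix_mulVec_eq_zero_iff_forall_reachable G).mp
      (by rw [← Matrix.toLin'_apply]; exact hlap)
    have hxyeq : (b i : V → ℝ) x = (b i : V → ℝ) y := hconst x y (hconn x y)
    apply hci
    rw [hcf i]
    have hfv : ∀ u : V, (f : V → ℝ) u
        = (if u = x then (1:ℝ) else 0) - (if u = y then (1:ℝ) else 0) := fun u => rfl
    have key : ∀ v : V, (b i : V → ℝ) v * (f : V → ℝ) v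
        = (if v = x then (b i : V → ℝ) v else 0) - (if v = y then (b i : V → ℝ) v else 0) := by
      intro v; rw [hfv]
      by_cases h1 : v = x <;> by_cases h2 : v = y <;> simp_all
    simp only [key]
    rw [Finset.sum_sub_distrib, Finset.sum_ite_eq' Finset.univ x, Finset.sum_ite_eq' Finset.univ y]
    simp [hxyeq]
  · -- the bound
    have h1 : Real.sqrt ((k:ℝ)/2) < Real.sqrt k := by
      apply Real.sqrt_lt_sqrt (by positivity)
      linarith
    have h2 : Real.sqrt k ≤ |μ i| := by
      rw [← Real.sqrt_sq_eq_abs]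
      apply Real.sqrt_le_sqrt
      rw [pow_two]
      exact hμi
    linarith
end

section
/- Let Γ be a distance-regular graph with valency k ≥ 2, diameter D ≥ 2, intersection number a₁, and smallest eigenvalue θ_D ≥ -m for some integer m ≥ 2. Then k < m(a₁ + m). -/
open SimpleGraph

/-- `G` is distance-regular with diameter `D` and intersection arrays `b`, `c`:
for vertices `x, y` at distance `i`, `y` has exactly `c i` neighbours at distance
`i - 1` from `x` and exactly `b i` neighbours at distance `i + 1` from `x`.
In particular the valency is `b 0`. -/
def IsDRG {V : Type*} [Fintype V] (G : SimpleGraph V) (D : ℕ) (b c : ℕ → ℕ) : Prop :=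
  G.Connected ∧ (∀ x y : V, G.dist x y ≤ D) ∧ (∃ x y : V, G.dist x y = D) ∧
  ∀ (i : ℕ) (x y : V), G.dist x y = i →
    {z : V | G.Adj y z ∧ G.dist x z = i - 1}.ncard = c i ∧
    {z : V | G.Adj y z ∧ G.dist x z = i + 1}.ncard = b i

namespace Stmt3Aux

open Finset Matrix

set_option linter.unusedSectionVars false
set_option linter.unusedVariables false

variable {V : Type*} [Fintype V] [DecidableEq V] {G : SimpleGraph V} [DecidableRel G.Adj]

lemma myStep (hconn : G.Connected) {x y : V} {n : ℕ} (h : G.dist x y = n + 1) :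
    ∃ w, G.Adj y w ∧ G.dist x w = n := by
  obtain ⟨p, hp⟩ := SimpleGraph.exists_walk_of_dist_ne_zero (by omega : G.dist x y ≠ 0)
  have hnil : ¬ p.reverse.Nil := by
    rw [SimpleGraph.Walk.nil_iff_length_eq]
    simp [hp, h]
  obtain ⟨w, hadj, q, hq⟩ := SimpleGraph.Walk.not_nil_iff.mp hnil
  refine ⟨w, hadj, le_antisymm ?_ ?_⟩
  · have hql : q.length = n := by
      have := congrArg SimpleGraph.Walk.length hq
      simp [hp, h] at this
      omega
    calc G.dist x w = G.dist w x := SimpleGraph.dist_comm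
      _ ≤ q.length := SimpleGraph.dist_le q
      _ = n := hql
  · have htri := hconn.dist_triangle (u := x) (v := w) (w := y)
    have : G.dist w y = 1 := SimpleGraph.dist_eq_one_iff_adj.mpr hadj.symm
    omega

lemma myExistsDist (hconn : G.Connected) :
    ∀ (d : ℕ) (x y : V), G.dist x y = d → ∀ n ≤ d, ∃ z, G.dist x z = n := by
  intro d
  induction d with
  | zero => intro x y h n hn; exact ⟨y, by omega⟩
  | succ d ih =>
    intro x y h n hn
    rcases eq_or_lt_of_le hn with rfl | hlt
    · exact ⟨y, h⟩
    · obtain ⟨w, _, hw⟩ := myStep hconn h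
      exact ih x w hw n (by omega)

lemma myNcard (p : V → Prop) [DecidablePred p] :
    {z : V | p z}.ncard = (Finset.univ.filter p).card := by
  rw [show {z : V | p z} = ↑(Finset.univ.filter p) by ext z; simp]
  exact Set.ncard_coe_finset _

lemma myDeg {b c : ℕ → ℕ}
    (hint : ∀ (i : ℕ) (x y : V), G.dist x y = i →
      {z : V | G.Adj y z ∧ G.dist x z = i - 1}.ncard = c i ∧
      {z : V | G.Adj y z ∧ G.dist x z = i + 1}.ncard = b i) (u : V) :
    (G.neighborFinset u).card = b 0 := by
  have h := (hint 0 u u (SimpleGraph.dist_self)).2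
  rw [myNcard] at h
  rw [← h]
  congr 1
  ext z
  simp only [mem_neighborFinset, Finset.mem_filter, Finset.mem_univ, true_and]
  exact ⟨fun hz => ⟨hz, SimpleGraph.dist_eq_one_iff_adj.mpr hz⟩, fun hz => hz.1⟩

lemma myA1 {b c : ℕ → ℕ} (hconn : G.Connected)
    (hint : ∀ (i : ℕ) (x y : V), G.dist x y = i →
      {z : V | G.Adj y z ∧ G.dist x z = i - 1}.ncard = c i ∧
      {z : V | G.Adj y z ∧ G.dist x z = i + 1}.ncard = b i)
    {a1 : ℕ} (ha1 : a1 + b 1 + c 1 = b 0)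
    {x u : V} (hadj : G.Adj x u) :
    ((G.neighborFinset u).filter (G.Adj x)).card = a1 := by
  have hd1 : G.dist x u = 1 := SimpleGraph.dist_eq_one_iff_adj.mpr hadj
  obtain ⟨hc, hb⟩ := hint 1 x u hd1
  rw [myNcard] at hc hb
  set N := G.neighborFinset u with hN
  set S0 := N.filter (fun z => G.dist x z = 0) with hS0
  set S1 := N.filter (fun z => G.dist x z = 1) with hS1
  set S2 := N.filter (fun z => G.dist x z = 2) with hS2
  have hle : ∀ z ∈ N, G.dist x z ≤ 2 := by
    intro z hz
    have h1 : G.dist u z = 1 :=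
      SimpleGraph.dist_eq_one_iff_adj.mpr ((mem_neighborFinset _ _ _).mp hz)
    have := hconn.dist_triangle (u := x) (v := u) (w := z)
    omega
  have hcard : S0.card + S2.card + S1.card = N.card := by
    rw [← Finset.card_union_of_disjoint, ← Finset.card_union_of_disjoint]
    · congr 1
      ext z
      simp only [Finset.mem_union, hS0, hS1, hS2, Finset.mem_filter]
      constructor
      · tauto
      · intro hz; have := hle z hz
        rcases Nat.lt_or_ge (G.dist x z) 1 with h | h
        · exact Or.inl (Or.inl ⟨hz, by omega⟩)
        · rcases Nat.lt_or_ge (G.dist x z) 2 with h2 | h2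
          · exact Or.inr ⟨hz, by omega⟩
          · exact Or.inl (Or.inr ⟨hz, by omega⟩)
    · rw [Finset.disjoint_left]
      intro z hz hz'
      simp only [hS0, hS1, hS2, Finset.mem_union, Finset.mem_filter] at hz hz'
      omega
    · rw [Finset.disjoint_left]
      intro z hz hz'
      simp only [hS0, hS1, hS2, Finset.mem_filter] at hz hz'
      omega
  have hS0c : S0.card = c 1 := by
    rw [← hc]; congr 1; ext z
    simp only [hS0, hN, Finset.mem_filter, Finset.mem_univ, true_and, mem_neighborFinset]
  have hS2c : S2.card = b 1 := by
    rw [← hb]; congr 1; ext z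
    simp only [hS2, hN, Finset.mem_filter, Finset.mem_univ, true_and, mem_neighborFinset]
  have hNc : N.card = b 0 := myDeg hint u
  have hfil : (G.neighborFinset u).filter (G.Adj x) = S1 := by
    ext z
    simp only [hS1, hN, Finset.mem_filter, mem_neighborFinset,
      SimpleGraph.dist_eq_one_iff_adj]
  rw [hN, hfil]; omega

lemma myPSD (G : SimpleGraph V) [DecidableRel G.Adj] (m : ℝ)
    (hmin : ∀ θ : ℝ, IsAdjEigenvalue G θ → -m ≤ θ) (v : V → ℝ) :
    0 ≤ v ⬝ᵥ (G.adjMatrix ℝ + m • (1 : Matrix V V ℝ)) *ᵥ v := by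
  set B := G.adjMatrix ℝ + m • (1 : Matrix V V ℝ) with hB
  have hBH : B.IsHermitian := by
    rw [Matrix.IsHermitian, Matrix.conjTranspose_eq_transpose_of_trivial, hB,
      Matrix.transpose_add, Matrix.transpose_smul, Matrix.transpose_one,
      SimpleGraph.transpose_adjMatrix]
  have heig : ∀ i, 0 ≤ hBH.eigenvalues i := by
    intro i
    set w : V → ℝ := ⇑(hBH.eigenvectorBasis i) with hw
    have hw0 : w ≠ 0 := by
      intro h
      apply hBH.eigenvectorBasis.orthonormal.ne_zero i
      ext j
      exact congrFun h j
    have hBw : B *ᵥ w = hBH.eigenvalues i • w := hBH.mulVec_eigenvectorBasis i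
    have hAw : (G.adjMatrix ℝ) *ᵥ w = (hBH.eigenvalues i - m) • w := by
      have : B *ᵥ w = (G.adjMatrix ℝ) *ᵥ w + m • w := by
        rw [hB, Matrix.add_mulVec, Matrix.smul_mulVec, Matrix.one_mulVec]
      rw [this] at hBw
      rw [sub_smul, eq_sub_iff_add_eq]
      exact hBw
    have := hmin _ ⟨w, hw0, hAw⟩
    linarith
  have hpsd : B.PosSemidef := hBH.posSemidef_iff_eigenvalues_nonneg.mpr heig
  simpa using hpsd.dotProduct_mulVec_nonneg v

lemma sum_ind_const' (s : Finset V) (p : V → Prop) [DecidablePred p] (c : ℝ) :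
    (∑ w ∈ s, if p w then c else 0) = (s.filter p).card * c := by
  rw [← Finset.sum_filter, Finset.sum_const, nsmul_eq_mul]

end Stmt3Aux

open Stmt3Aux Finset Matrix

theorem stmt3 {V : Type*} [Fintype V] [DecidableEq V] (G : SimpleGraph V)
    [DecidableRel G.Adj] (D : ℕ) (b c : ℕ → ℕ) (hDRG : IsDRG G D b c)
    (hk : 2 ≤ b 0) (hD : 2 ≤ D) (m : ℕ) (hm : 2 ≤ m)
    (a1 : ℕ) (ha1 : a1 + b 1 + c 1 = b 0)
    (hmin : ∀ θ : ℝ, IsAdjEigenvalue G θ → -(m : ℝ) ≤ θ) :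
    (b 0 : ℝ) < (m : ℝ) * ((a1 : ℝ) + m) := by
  obtain ⟨hconn, hdle, ⟨x, y0, hxy⟩, hint⟩ := hDRG
  obtain ⟨z2, hz2⟩ := myExistsDist hconn D x y0 hxy 2 hD
  have hxz2 : ¬ G.Adj x z2 := by
    intro h
    have := SimpleGraph.dist_eq_one_iff_adj.mpr h
    omega
  have hz2x : z2 ≠ x := by
    intro h
    subst h
    rw [SimpleGraph.dist_self] at hz2
    omega
  set k := b 0 with hkdef
  set cc := ((G.neighborFinset z2).filter (G.Adj x)).card with hccdef
  -- cc ≥ 1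
  have hcc1 : 1 ≤ cc := by
    obtain ⟨p, hp⟩ := SimpleGraph.exists_walk_of_dist_ne_zero
      (by omega : G.dist x z2 ≠ 0)
    rw [hz2] at hp
    have h01 : G.Adj x (p.getVert 1) := by
      have := p.adj_getVert_succ (i := 0) (by omega)
      simpa using this
    have h12 : G.Adj (p.getVert 1) z2 := by
      have := p.adj_getVert_succ (i := 1) (by omega)
      have h2 : p.getVert 2 = z2 := by
        have := p.getVert_length
        rw [hp] at this
        exact this
      rwa [h2] at this
    rw [hccdef, Nat.one_le_iff_ne_zero, ← Nat.pos_iff_ne_zero, Finset.card_pos]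
    exact ⟨p.getVert 1, by simp [Finset.mem_filter, mem_neighborFinset, h12.symm, h01]⟩
  have hdeg : ∀ u : V, (G.neighborFinset u).card = k := fun u => myDeg hint u
  have hA1 : ∀ u : V, G.Adj x u → ((G.neighborFinset u).filter (G.Adj x)).card = a1 :=
    fun u h => myA1 hconn hint ha1 h
  -- the test vector
  set vv : V → ℝ := fun w =>
    (if w = x then -(k : ℝ) else 0) + (if G.Adj x w then (m : ℝ) else 0) +
      (if w = z2 then (-1 : ℝ) else 0) with hvv
  have hQ := myPSD G (m : ℝ) hmin vv
  -- f u = sum of vv over neighbours of u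
  set f : V → ℝ := fun u => ∑ w ∈ G.neighborFinset u, vv w with hfdef
  have hf : ∀ u : V, f u = (if x ∈ G.neighborFinset u then -(k : ℝ) else 0)
      + (((G.neighborFinset u).filter (G.Adj x)).card : ℝ) * (m : ℝ)
      + (if z2 ∈ G.neighborFinset u then (-1 : ℝ) else 0) := by
    intro u
    rw [hfdef]
    simp only [hvv]
    rw [Finset.sum_add_distrib, Finset.sum_add_distrib,
      Finset.sum_ite_eq' (G.neighborFinset u) x (fun _ => -(k : ℝ)),
      Finset.sum_ite_eq' (G.neighborFinset u) z2 (fun _ => (-1 : ℝ)),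
      sum_ind_const' (G.neighborFinset u) (G.Adj x) (m : ℝ)]
  have hfx : f x = (m : ℝ) * k := by
    rw [hf]
    have h1 : x ∉ G.neighborFinset x := by simp
    have h2 : z2 ∉ G.neighborFinset x := by simp [hxz2]
    have h3 : (G.neighborFinset x).filter (G.Adj x) = G.neighborFinset x :=
      Finset.filter_true_of_mem (by simp)
    rw [if_neg h1, if_neg h2, h3, hdeg x]
    ring
  have hfz2 : f z2 = (m : ℝ) * cc := by
    rw [hf]
    have h1 : x ∉ G.neighborFinset z2 := by
      simp only [mem_neighborFinset]
      exact fun h => hxz2 h.symm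
    have h2 : z2 ∉ G.neighborFinset z2 := by simp
    rw [if_neg h1, if_neg h2, ← hccdef]
    ring
  have hfu : ∀ u ∈ G.neighborFinset x,
      f u = -(k : ℝ) + (a1 : ℝ) * m + (if G.Adj u z2 then (-1 : ℝ) else 0) := by
    intro u hu
    have hadj : G.Adj x u := (mem_neighborFinset _ _ _).mp hu
    rw [hf, hA1 u hadj]
    have h1 : x ∈ G.neighborFinset u := by
      simp only [mem_neighborFinset]; exact hadj.symm
    rw [if_pos h1]
    congr 1
    simp only [mem_neighborFinset]
  have hcc2 : ((G.neighborFinset x).filter (fun u => G.Adj u z2)).card = cc := by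
    rw [hccdef]
    congr 1
    ext w
    simp only [Finset.mem_filter, mem_neighborFinset]
    constructor
    · rintro ⟨h1, h2⟩; exact ⟨h2.symm, h1⟩
    · rintro ⟨h1, h2⟩; exact ⟨h2, h1.symm⟩
  -- sum of f over neighbours of x
  have hsumf : ∑ u ∈ G.neighborFinset x, f u
      = (k : ℝ) * (-(k : ℝ) + (a1 : ℝ) * m) + (cc : ℝ) * (-1) := by
    rw [Finset.sum_congr rfl hfu, Finset.sum_add_distrib, Finset.sum_const,
      sum_ind_const' (G.neighborFinset x) (fun u => G.Adj u z2) (-1 : ℝ), hdeg x,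
      hcc2, nsmul_eq_mul]
  -- value of the quadratic form
  have hQval : vv ⬝ᵥ (G.adjMatrix ℝ + (m : ℝ) • (1 : Matrix V V ℝ)) *ᵥ vv
      = (m : ℝ) * ((k : ℝ) * ((m : ℝ) * a1 + m * m - k) + 1 - 2 * cc) := by
    rw [Matrix.add_mulVec, dotProduct_add, Matrix.smul_mulVec,
      Matrix.one_mulVec, dotProduct_smul, smul_eq_mul]
    have hAv : vv ⬝ᵥ (G.adjMatrix ℝ *ᵥ vv) = ∑ u : V, vv u * f u := by
      rw [dotProduct]
      refine Finset.sum_congr rfl fun u _ => ?_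
      rw [SimpleGraph.adjMatrix_mulVec_apply]
    have hsplit : ∀ u : V, vv u * f u = (if u = x then -(k : ℝ) * f u else 0)
        + (if G.Adj x u then (m : ℝ) * f u else 0)
        + (if u = z2 then (-1 : ℝ) * f u else 0) := by
      intro u
      simp only [hvv, add_mul, ite_mul, zero_mul]
    have hS1 : vv ⬝ᵥ (G.adjMatrix ℝ *ᵥ vv)
        = -(k : ℝ) * f x + (m : ℝ) * ((k : ℝ) * (-(k : ℝ) + (a1 : ℝ) * m) + (cc : ℝ) * (-1))
          + (-1 : ℝ) * f z2 := by
      rw [hAv, Finset.sum_congr rfl fun u _ => hsplit u, Finset.sum_add_distrib,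
        Finset.sum_add_distrib, Finset.sum_ite_eq' Finset.univ x (fun u => -(k : ℝ) * f u),
        Finset.sum_ite_eq' Finset.univ z2 (fun u => (-1 : ℝ) * f u)]
      simp only [Finset.mem_univ, if_pos]
      congr 1
      congr 1
      rw [← Finset.sum_filter, ← SimpleGraph.neighborFinset_eq_filter, ← Finset.mul_sum, hsumf]
    have hS2 : vv ⬝ᵥ vv = (k : ℝ) * k + (m : ℝ) * m * k + 1 := by
      have hsq : ∀ u : V, vv u * vv u = (if u = x then (k : ℝ) * k else 0)
          + (if G.Adj x u then (m : ℝ) * m else 0) + (if u = z2 then (1 : ℝ) else 0) := by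
        intro u
        simp only [hvv]
        by_cases h1 : u = x
        · subst h1
          rw [if_pos rfl, if_pos rfl, if_neg (G.irrefl), if_neg (G.irrefl),
            if_neg (Ne.symm hz2x), if_neg (Ne.symm hz2x)]
          ring
        · by_cases h2 : G.Adj x u
          · have h3 : u ≠ z2 := fun h => hxz2 (h ▸ h2)
            rw [if_neg h1, if_neg h1, if_pos h2, if_pos h2, if_neg h3, if_neg h3]
            ring
          · by_cases h3 : u = z2
            · rw [if_neg h1, if_neg h1, if_neg h2, if_neg h2, if_pos h3, if_pos h3]
              ring
            · rw [if_neg h1, if_neg h1, if_neg h2, if_neg h2, if_neg h3, if_neg h3]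
              ring
      rw [dotProduct, Finset.sum_congr rfl fun u _ => hsq u,
        Finset.sum_add_distrib, Finset.sum_add_distrib,
        Finset.sum_ite_eq' Finset.univ x (fun _ => (k : ℝ) * k),
        Finset.sum_ite_eq' Finset.univ z2 (fun _ => (1 : ℝ)),
        sum_ind_const' Finset.univ (G.Adj x) ((m : ℝ) * m),
        ← SimpleGraph.neighborFinset_eq_filter, hdeg x]
      simp only [Finset.mem_univ, if_pos]
      ring
    rw [hS1, hS2, hfx, hfz2]
    ring
  rw [hQval] at hQ
  -- final numeric contradiction
  by_contra hcon
  push_neg at hcon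
  have hccR : (1 : ℝ) ≤ (cc : ℝ) := by exact_mod_cast hcc1
  have hmR : (2 : ℝ) ≤ (m : ℝ) := by exact_mod_cast hm
  have hkR : (2 : ℝ) ≤ (k : ℝ) := by exact_mod_cast hk
  have h1 : (m : ℝ) * a1 + m * m - k ≤ 0 := by nlinarith
  have h2 : (k : ℝ) * ((m : ℝ) * a1 + m * m - k) ≤ 0 :=
    mul_nonpos_of_nonneg_of_nonpos (by linarith) h1
  nlinarith
end

section
/- Let Γ be a geometric distance-regular graph with respect to a set 𝒞 of Delsarte cliques, with diameter D ≥ 2 and c₂ ≥ 2. Then τ₂ ≥ ψ₁, where ψ₁ is the number of neighbors in a Delsarte clique C of a vertex at distance 1 from C, and τ₂ is the number of cliques in 𝒞 containing y and at distance 1 from x, for vertices x, y at distance 2. -/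
open SimpleGraph

/-- If `dist x y = n + 1` then `x` has a neighbour at distance `n` from `y`. -/
lemma exists_adj_dist {V : Type*} {G : SimpleGraph V} {x y : V} {n : ℕ}
    (h : G.dist x y = n + 1) : ∃ z : V, G.Adj x z ∧ G.dist z y = n := by
  have hne : G.dist x y ≠ 0 := by omega
  obtain ⟨p, hp⟩ := SimpleGraph.exists_walk_of_dist_ne_zero hne
  cases p with
  | nil => simp at hp h
  | cons hadj q =>
    rename_i z
    refine ⟨z, hadj, ?_⟩
    have h1 : G.dist z y ≤ n := by
      have := G.dist_le q
      simp [SimpleGraph.Walk.length_cons] at hp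
      omega
    have h2 : n ≤ G.dist z y := by
      obtain ⟨q', hq'⟩ := SimpleGraph.Reachable.exists_walk_length_eq_dist ⟨q⟩
      have := G.dist_le (SimpleGraph.Walk.cons hadj q')
      simp [SimpleGraph.Walk.length_cons] at this
      omega
    omega

/-- If some pair of vertices is at distance `n + 2`, some pair is at distance `2`. -/
lemma exists_dist_two {V : Type*} {G : SimpleGraph V} :
    ∀ (n : ℕ) (x y : V), G.dist x y = n + 2 → ∃ z w : V, G.dist z w = 2 := by
  intro n
  induction n with
  | zero => exact fun x y h => ⟨x, y, h⟩
  | succ m ih =>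
    intro x y h
    obtain ⟨z, _, hz⟩ := exists_adj_dist (n := m + 2) (by omega : G.dist x y = (m + 2) + 1)
    exact ih z y hz

theorem stmt17 {V : Type*} [Fintype V] [DecidableEq V] (G : SimpleGraph V)
    [DecidableRel G.Adj] (D : ℕ) (b c : ℕ → ℕ) (hDRG : IsDRG G D b c)
    (hD : 2 ≤ D) (hc2 : 2 ≤ c 2)
    (θ : ℝ) (hθ : IsAdjEigenvalue G θ) (hmin : ∀ η : ℝ, IsAdjEigenvalue G η → θ ≤ η)
    (𝒞 : Set (Finset V))
    (hclq : ∀ C ∈ 𝒞, G.IsClique (C : Set V))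
    -- each clique in 𝒞 is a Delsarte clique: it has exactly `1 + k/(-θ_D)` vertices
    (hDel : ∀ C ∈ 𝒞, (C.card : ℝ) = 1 + (b 0 : ℝ) / (-θ))
    -- Γ is geometric w.r.t. 𝒞: every edge lies in a unique clique of 𝒞
    (hedge : ∀ x y : V, G.Adj x y → ∃! C : Finset V, C ∈ 𝒞 ∧ x ∈ C ∧ y ∈ C)
    (ψ₁ τ₂ : ℕ)
    -- ψ₁: number of neighbours in C of a vertex at distance 1 from C
    (hψ : ∀ C ∈ 𝒞, ∀ x : V, x ∉ C → (∃ z ∈ C, G.Adj x z) →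
      {z : V | z ∈ C ∧ G.Adj x z}.ncard = ψ₁)
    -- τ₂: number of cliques of 𝒞 containing y at distance 1 from x, for d(x,y) = 2
    (hτ : ∀ x y : V, G.dist x y = 2 →
      {C : Finset V | C ∈ 𝒞 ∧ y ∈ C ∧ x ∉ C ∧ ∃ z ∈ C, G.Adj x z}.ncard = τ₂) :
    ψ₁ ≤ τ₂ := by
  obtain ⟨hconn, hle, ⟨x₀, y₀, hxy₀⟩, hint⟩ := hDRG
  -- find a pair at distance 2
  obtain ⟨x, y, hxy⟩ : ∃ x y : V, G.dist x y = 2 := by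
    obtain ⟨n, hn⟩ : ∃ n, D = n + 2 := ⟨D - 2, by omega⟩
    exact exists_dist_two n x₀ y₀ (by omega)
  have hxny : x ≠ y := by
    intro h; rw [h] at hxy; simp [SimpleGraph.dist_self] at hxy
  have hnadj : ¬ G.Adj x y := by
    intro h
    have := (SimpleGraph.dist_eq_one_iff_adj (G := G)).mpr h
    omega
  -- find a common neighbour z of x and y
  obtain ⟨z, hxz, hzy⟩ : ∃ z : V, G.Adj x z ∧ G.Adj z y := by
    obtain ⟨z, h1, h2⟩ := exists_adj_dist (n := 1) hxy
    exact ⟨z, h1, (SimpleGraph.dist_eq_one_iff_adj (G := G)).mp h2⟩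
  -- the clique through the edge z y
  obtain ⟨C, ⟨hC𝒞, hzC, hyC⟩, hCuniq⟩ := hedge z y hzy
  have hxC : x ∉ C := by
    intro hxC
    exact hnadj (hclq C hC𝒞 hxC hyC hxny)
  -- the set of neighbours of x in C has ψ₁ elements
  have hS : {w : V | w ∈ C ∧ G.Adj x w}.ncard = ψ₁ :=
    hψ C hC𝒞 x hxC ⟨z, hzC, hxz⟩
  -- the target set of cliques, counted by τ₂ for the pair (y, x)
  have hT : {E : Finset V | E ∈ 𝒞 ∧ x ∈ E ∧ y ∉ E ∧ ∃ w ∈ E, G.Adj y w}.ncard = τ₂ :=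
    hτ y x (by rwa [SimpleGraph.dist_comm])
  -- map each neighbour w of x in C to the unique clique through the edge x w
  rw [← hS, ← hT]
  -- well, choice-dependent function; define it cleanly
  classical
  set f : V → Finset V := fun w => if h : G.Adj x w then (hedge x w h).choose else ∅ with hf
  have hfmem : ∀ w, (h : G.Adj x w) → f w ∈ 𝒞 ∧ x ∈ f w ∧ w ∈ f w := by
    intro w h
    simp only [hf, dif_pos h]
    exact (hedge x w h).choose_spec.1
  apply Set.ncard_le_ncard_of_injOn f
  · intro w hw
    obtain ⟨hwC, hxw⟩ := hw
    obtain ⟨hD𝒞, hxD, hwD⟩ := hfmem w hxw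
    have hwy : w ≠ y := fun h => hnadj (h ▸ hxw)
    refine ⟨hD𝒞, hxD, ?_, w, hwD, hclq C hC𝒞 hyC hwC hwy.symm⟩
    intro hyD
    exact hnadj (hclq _ hD𝒞 hxD hyD hxny)
  · -- injectivity: two distinct neighbours w, w' of x in C give distinct cliques
    intro w hw w' hw' hww'
    by_contra hne
    obtain ⟨hwC, hxw⟩ := hw
    obtain ⟨hw'C, hxw'⟩ := hw'
    obtain ⟨hD𝒞, hxD, hwD⟩ := hfmem w hxw
    obtain ⟨hD'𝒞, hxD', hw'D⟩ := hfmem w' hxw'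
    -- f w contains both w and w' (since f w = f w'), and they are adjacent,
    -- so by uniqueness of the clique through edge w w', f w = C; but x ∈ f w, x ∉ C.
    have hadjww' : G.Adj w w' := hclq C hC𝒞 hwC hw'C hne
    obtain ⟨E, hE, hEuniq⟩ := hedge w w' hadjww'
    have h1 : C = E := hEuniq C ⟨hC𝒞, hwC, hw'C⟩
    have h2 : f w = E := hEuniq (f w) ⟨hD𝒞, hwD, hww' ▸ hw'D⟩
    apply hxC
    rw [h1, ← h2]
    exact hxD
end
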